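/- arXiv:0706.1907 — 2 statements merged into one kernel-verified Lean document; each statement's English description precedes it below -/
import Mathlib

section
/- Let B be a commutative ring, r a positive integer, and N a finitely generated B-submodule of B^r. Suppose the image of the natural map ⋀^r N → ⋀^r B^r ≅ B is a principal ideal generated by the image of a decomposable element n₁ ∧ ⋯ ∧ n_r with n₁,…,n_r ∈ N, and that this generator is a nonzerodivisor in B. Then N is a free B-module of rank r with basis n₁,…,n_r. -/
/-- Let `B` be a commutative ring, `r` a positive integer and `N` a finitely generated
submodule of `B^r`.  Suppose that the image of the natural map `⋀^r N → ⋀^r B^r ≅ B`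
(the isomorphism being given by the determinant in the standard basis, so that the image is
the ideal generated by the determinants of all matrices whose rows lie in `N`) is a principal
ideal generated by the image of the decomposable element `n₁ ∧ ⋯ ∧ n_r` (i.e. by
`det (n₁, …, n_r)`) with `n₁, …, n_r ∈ N`, and that this generator is a nonzerodivisor in `B`.
Then `N` is a free `B`-module of rank `r` with basis `n₁, …, n_r`. -/
theorem submodule_free_of_exterior_power_principal
    {B : Type*} [CommRing B] {r : ℕ} (hr : 0 < r)
    (N : Submodule B (Fin r → B)) (hfg : N.FG)
    (n : Fin r → (Fin r → B)) (hn : ∀ i, n i ∈ N)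
    (hgen : Ideal.span {x : B | ∃ m : Fin r → (Fin r → B),
        (∀ i, m i ∈ N) ∧ x = (Matrix.of m).det}
      = Ideal.span {(Matrix.of n).det})
    (hnzd : (Matrix.of n).det ∈ nonZeroDivisors B) :
    ∃ b : Module.Basis (Fin r) B N, ∀ i, (b i : Fin r → B) = n i := by
  classical
  set d := (Matrix.of n).det with hd
  set M := Matrix.transpose (Matrix.of n) with hM
  have hdetM : M.det = d := Matrix.det_transpose _
  -- every element of N is a combination of the n i
  have key : ∀ v ∈ N, ∃ c : Fin r → B, v = ∑ i, c i • n i := by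
    intro v hv
    have hcr : ∀ j, ∃ c : B, Matrix.cramer M v j = d * c := by
      intro j
      have hmem : Matrix.cramer M v j ∈ Ideal.span {d} := by
        rw [← hgen]
        apply Ideal.subset_span
        refine ⟨Function.update n j v, ?_, ?_⟩
        · intro i
          rcases eq_or_ne i j with rfl | h
          · simpa using hv
          · simpa [Function.update_of_ne h] using hn i
        · rw [Matrix.cramer_apply, hM, Matrix.updateCol_transpose,
            Matrix.det_transpose]
          rfl
      rwa [Ideal.mem_span_singleton] at hmem
    choose c hc using hcr
    refine ⟨c, ?_⟩
    have h1 : M.mulVec (Matrix.cramer M v) = d • v := by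
      rw [Matrix.mulVec_cramer, hdetM]
    funext k
    have h2 : (M.mulVec (Matrix.cramer M v)) k = d * ∑ i, c i * n i k := by
      simp only [Matrix.mulVec, dotProduct, hc, Finset.mul_sum]
      apply Finset.sum_congr rfl
      intro j _
      simp [hM]
      ring
    have h3 : d * v k = d * ∑ i, c i * n i k := by
      rw [← h2, h1]; simp
    have := (mul_cancel_left_mem_nonZeroDivisors hnzd).mp h3
    simpa [Finset.sum_apply] using this
  -- linear independence
  have hli : ∀ g : Fin r → B, ∑ i, g i • n i = 0 → ∀ i, g i = 0 := by
    intro g hg i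
    have hMg : M.mulVec g = 0 := by
      funext k
      have := congrFun hg k
      simpa [Matrix.mulVec, dotProduct, hM, Finset.sum_apply,
        mul_comm] using this
    have : M.adjugate.mulVec (M.mulVec g) = 0 := by rw [hMg, Matrix.mulVec_zero]
    rw [Matrix.mulVec_mulVec, Matrix.adjugate_mul, hdetM] at this
    have h4 : d * g i = 0 := by
      have := congrFun this i
      simpa [Matrix.smul_mulVec, Matrix.one_mulVec] using this
    have h5 : d * g i = d * 0 := by simpa using h4
    exact (mul_cancel_left_mem_nonZeroDivisors hnzd).mp h5
  -- build the basis
  let v : Fin r → N := fun i => ⟨n i, hn i⟩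
  have hli' : LinearIndependent B v := by
    rw [Fintype.linearIndependent_iff]
    intro g hg
    apply hli g
    have := congrArg (Subtype.val) hg
    simpa using this
  have hsp : ⊤ ≤ Submodule.span B (Set.range v) := by
    rintro ⟨x, hx⟩ -
    obtain ⟨c, hcx⟩ := key x hx
    have : (⟨x, hx⟩ : N) = ∑ i, c i • v i := by
      apply Subtype.ext
      simpa using hcx
    rw [this]
    exact Submodule.sum_mem _ fun i _ =>
      Submodule.smul_mem _ _ (Submodule.subset_span ⟨i, rfl⟩)
  exact ⟨Module.Basis.mk hli' hsp, fun i => by simp [Module.Basis.mk_apply, v]⟩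
end

section
/- Let S be a noetherian scheme, X and Y separated S-schemes of finite type, U a schematically dense open subscheme of X, and f : U → Y a proper S-morphism. Then the graph of f is closed in X ×_S Y; i.e., f defines a proper quasi-domination X ⇢ Y. -/
open AlgebraicGeometry CategoryTheory CategoryTheory.Limits Opposite

universe u

namespace Nagata

/-- The data of an ideal sheaf on a scheme: an ideal of sections over each open set. -/
def IdealData (X : Scheme.{u}) : Type u := ∀ U : X.Opens, Ideal Γ(X, U)

/-- The data `I` is a coherent (equivalently, on a noetherian scheme, quasi-coherent and
locally finitely generated) sheaf of ideals. -/
structure IsCoherentIdeal {X : Scheme.{u}} (I : IdealData X) : Prop where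
  map_le : ∀ {U V : X.Opens} (h : V ≤ U),
    (I U).map (X.presheaf.map (homOfLE h).op).hom ≤ I V
  qcoh : ∀ (U : X.Opens), IsAffineOpen U → ∀ f : Γ(X, U),
    I (X.basicOpen f) = (I U).map (X.presheaf.map (homOfLE (X.basicOpen_le f)).op).hom
  fg : ∀ (U : X.Opens), IsAffineOpen U → (I U).FG

/-- The vanishing locus `V(I)` of an ideal sheaf: the points at which `I` is not the
unit ideal on any neighbourhood. -/
def vanishingLocus {X : Scheme.{u}} (I : IdealData X) : Set X :=
  {x | ∀ U : X.Opens, x ∈ U → I U ≠ ⊤}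

/-- The inverse image ideal sheaf `π⁻¹ I · O_{X'}`. -/
def inverseImageIdeal {X' X : Scheme.{u}} (π : X' ⟶ X) (I : IdealData X) :
    IdealData X' := fun V =>
  Ideal.span {s | ∃ (U : X.Opens) (t : Γ(X, U)) (e : V ≤ π ⁻¹ᵁ U),
    t ∈ I U ∧ s = π.appLE U V e t}

/-- The inverse image ideal sheaf of `I` under `π` is an invertible ideal sheaf, i.e.
locally generated by a single nonzerodivisor. -/
def InvImageInvertible {X' X : Scheme.{u}} (π : X' ⟶ X) (I : IdealData X) : Prop :=
  ∀ x : X', ∃ (V : X'.Opens), x ∈ V ∧ ∃ f : Γ(X', V),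
    f ∈ nonZeroDivisors Γ(X', V) ∧ inverseImageIdeal π I V = Ideal.span {f}

/-- `π : X' ⟶ X` is the blowing-up of `X` along the ideal sheaf `I` (i.e. `Proj` of the
Rees algebra of `I`), characterized by the universal property of the blow-up: the inverse
image ideal sheaf of `I` on `X'` is invertible, and `π` is universal among morphisms with
this property. -/
structure IsBlowUpAlong {X' X : Scheme.{u}} (π : X' ⟶ X) (I : IdealData X) : Prop where
  invertible : InvImageInvertible π I
  universal : ∀ (Y : Scheme.{u}) (g : Y ⟶ X), InvImageInvertible g I →
    ∃! h : Y ⟶ X', h ≫ π = g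

/-- An open subscheme is schematically dense iff restriction of sections to it is injective,
equivalently the scheme-theoretic image of `U ↪ X` is all of `X`, equivalently `U` contains
all associated points of `X`. -/
def SchematicallyDense {X : Scheme.{u}} (U : X.Opens) : Prop :=
  ∀ V : X.Opens, Function.Injective
    (X.presheaf.map (homOfLE (inf_le_left : V ⊓ U ≤ V)).op)


instance : MorphismProperty.HasOfPostcompProperty @IsProper @IsSeparated := by
  apply (MorphismProperty.hasOfPostcompProperty_iff_le_diagonal (P := @IsProper)).mpr
  intro X Y f hf
  have : IsSeparated f := hf
  show IsProper (pullback.diagonal f)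
  infer_instance

/-- Let `S` be a noetherian scheme, `X` and `Y` separated `S`-schemes of finite type, `U` a
schematically dense open subscheme of `X`, and `f : U ⟶ Y` a proper `S`-morphism.  Then the
graph of `f` is closed in `X ×_S Y`; i.e. `f` defines a proper quasi-domination `X ⇢ Y`. -/
theorem graph_closed_of_proper
    {S X Y : Scheme.{u}} [IsNoetherian S]
    (p : X ⟶ S) (q : Y ⟶ S)
    [IsSeparated p] [LocallyOfFiniteType p] [QuasiCompact p]
    [IsSeparated q] [LocallyOfFiniteType q] [QuasiCompact q]
    (U : X.Opens) (hU : SchematicallyDense U)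
    (f : U.toScheme ⟶ Y) [IsProper f] (hf : U.ι ≫ p = f ≫ q) :
    IsClosed (Set.range (pullback.lift U.ι f hf).base) := by
  have hsep : IsSeparated (pullback.snd p q) :=
    inferInstance
  have hprop : IsProper (pullback.lift U.ι f hf) := by
    apply MorphismProperty.of_postcomp (W := @IsProper) (W' := @IsSeparated)
      _ (pullback.snd p q) hsep
    rw [pullback.lift_snd]; exact (inferInstance : IsProper f)
  have := (pullback.lift U.ι f hf).isClosedMap
  simpa using this _ isClosed_univ

end Nagata
end
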